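/- Let P = {(x, y) ∈ ℝ^n × ℝ^m : Ax + By ≤ b} be a polyhedron. Then the projection of P onto ℝ^n equals {x ∈ ℝ^n : rᵀ(b − Ax) ≥ 0 for all extreme rays r of the cone Q = {v ∈ ℝ^k : v ≥ 0, vᵀB = 0}}, provided Q is pointed (which it is, being contained in the nonnegative orthant). -/

import Mathlib

open Matrix

def IsExtremeRay {V : Type*} [AddCommMonoid V] [Module ℝ V] (C : Set V) (r : V) : Prop :=
  r ∈ C ∧ r ≠ 0 ∧ ∀ x ∈ C, ∀ y ∈ C, r = x + y →
    (∃ a : ℝ, 0 ≤ a ∧ x = a • r) ∧ (∃ b : ℝ, 0 ≤ b ∧ y = b • r)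


private lemma sum_single_mul {ι : Type} [Fintype ι] [DecidableEq ι] (l : ι) (a : ℝ) (f : ι → ℝ) :
    ∑ t, (Pi.single l a : ι → ℝ) t * f t = a * f l := by
  rw [Finset.sum_eq_single l] <;> simp (config := {contextual := true}) [Pi.single_apply]

theorem farkas_rows : ∀ (m : ℕ) (ι : Type) [Fintype ι] (R : ι → Fin m → ℝ) (c : ι → ℝ),
    (∀ v : ι → ℝ, (∀ i, 0 ≤ v i) → (∀ q, ∑ i, v i * R i q = 0) → 0 ≤ ∑ i, v i * c i) →
    ∃ y : Fin m → ℝ, ∀ i, ∑ q, R i q * y q ≤ c i := by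
  intro m
  induction m with
  | zero =>
    intro ι _ R c H
    refine ⟨fun q => 0, fun i => ?_⟩
    simp only [Finset.univ_eq_empty, Finset.sum_empty]
    classical
    have := H (Pi.single i 1) (fun t => by
      by_cases h : t = i <;> simp [h, Pi.single_apply]) (fun q => q.elim0)
    rwa [sum_single_mul, one_mul] at this
  | succ m ih =>
    intro ι _ R c H
    classical
    set β : ι → ℝ := fun i => R i (Fin.last m) with hβ
    set R₀ : ι → Fin m → ℝ := fun i p => R i p.castSucc with hR₀
    let ι' : Type := {l : ι // β l = 0} ⊕ ({i : ι // 0 < β i} × {j : ι // β j < 0})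
    let R' : ι' → Fin m → ℝ := Sum.elim (fun l => R₀ l.1)
      (fun p q => β p.1.1 * R₀ p.2.1 q - β p.2.1 * R₀ p.1.1 q)
    let c' : ι' → ℝ := Sum.elim (fun l => c l.1)
      (fun p => β p.1.1 * c p.2.1 - β p.2.1 * c p.1.1)
    let u : ι' → ι → ℝ := Sum.elim (fun l => Pi.single l.1 1)
      (fun p => (Pi.single p.2.1 (β p.1.1) : ι → ℝ) + (Pi.single p.1.1 (-β p.2.1) : ι → ℝ))
    have hu_nonneg : ∀ ρ t, 0 ≤ u ρ t := by
      rintro (l | p) t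
      · by_cases h : t = l.1 <;> simp [u, h, Pi.single_apply]
      · have h1 := p.1.2; have h2 := p.2.2
        simp only [u, Sum.elim_inr, Pi.add_apply]
        have hA : 0 ≤ (Pi.single p.2.1 (β p.1.1) : ι → ℝ) t := by
          rw [Pi.single_apply]; split_ifs <;> linarith
        have hB : 0 ≤ (Pi.single p.1.1 (-β p.2.1) : ι → ℝ) t := by
          rw [Pi.single_apply]; split_ifs <;> linarith
        linarith
    have hu_comb : ∀ ρ (q : Fin (m+1)), ∑ t, u ρ t * R t q = (Fin.snoc (R' ρ) 0 : Fin (m+1) → ℝ) q := by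
      rintro (l | p) q
      · simp only [u, Sum.elim_inl, sum_single_mul, one_mul]
        refine Fin.lastCases ?_ (fun p => ?_) q
        · simpa [Fin.snoc_last] using l.2
        · simp [Fin.snoc_castSucc, R', R₀]
      · simp only [u, Sum.elim_inr, Pi.add_apply, add_mul, Finset.sum_add_distrib,
          sum_single_mul]
        refine Fin.lastCases ?_ (fun q' => ?_) q
        · simp [Fin.snoc_last, β]; ring
        · simp [Fin.snoc_castSucc, R', R₀]; ring
    have hu_dot : ∀ ρ, ∑ t, u ρ t * c t = c' ρ := by
      rintro (l | p)
      · simp [u, c', sum_single_mul]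
      · simp [u, Pi.add_apply, add_mul, Finset.sum_add_distrib, sum_single_mul, c']; ring
    have H' : ∀ v' : ι' → ℝ, (∀ ρ, 0 ≤ v' ρ) → (∀ q, ∑ ρ, v' ρ * R' ρ q = 0) →
        0 ≤ ∑ ρ, v' ρ * c' ρ := by
      intro v' hpos hzero
      set v : ι → ℝ := fun t => ∑ ρ, v' ρ * u ρ t with hv
      have hswap : ∀ (f : ι → ℝ), ∑ t, v t * f t = ∑ ρ, v' ρ * ∑ t, u ρ t * f t := by
        intro f
        simp only [hv, Finset.sum_mul, Finset.mul_sum]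
        rw [Finset.sum_comm]
        congr 1; ext t; congr 1; ext ρ; ring
      have h1 : ∀ q, ∑ t, v t * R t q = 0 := by
        intro q
        rw [hswap (fun t => R t q)]
        simp only [hu_comb]
        refine Fin.lastCases ?_ (fun q' => ?_) q
        · simp [Fin.snoc_last]
        · simp only [Fin.snoc_castSucc]; exact hzero q'
      have h2 := H v (fun t => Finset.sum_nonneg fun ρ _ => mul_nonneg (hpos ρ) (hu_nonneg ρ t)) h1
      rwa [hswap c, show (∑ ρ, v' ρ * ∑ t, u ρ t * c t) = ∑ ρ, v' ρ * c' ρ from by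
        congr 1; ext ρ; rw [hu_dot]] at h2
    obtain ⟨y₀, hy₀⟩ := ih ι' R' c' H'
    set s : ι → ℝ := fun i => c i - ∑ p, R₀ i p * y₀ p with hs
    have hzero : ∀ i, β i = 0 → 0 ≤ s i := by
      intro i h
      have := hy₀ (Sum.inl ⟨i, h⟩)
      simp only [R', c', Sum.elim_inl, hs] at this ⊢
      linarith
    have hpair : ∀ i j (hi : 0 < β i) (hj : β j < 0), β j * s i ≤ β i * s j := by
      intro i j hi hj
      have := hy₀ (Sum.inr (⟨i, hi⟩, ⟨j, hj⟩))
      simp only [R', c', Sum.elim_inr, hs] at this ⊢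
      rw [show (∑ q, (β i * R₀ j q - β j * R₀ i q) * y₀ q)
          = β i * (∑ p, R₀ j p * y₀ p) - β j * (∑ p, R₀ i p * y₀ p) from by
        rw [Finset.mul_sum, Finset.mul_sum, ← Finset.sum_sub_distrib]; congr 1; ext q; ring] at this
      nlinarith
    have hdivpair : ∀ i j (hi : 0 < β i) (hj : β j < 0), s j / β j ≤ s i / β i := by
      intro i j hi hj
      rw [show s j / β j = -s j / -β j by rw [neg_div_neg_eq],
        div_le_div_iff₀ (by linarith) hi]
      nlinarith [hpair i j hi hj]
    -- choose t
    have key : ∃ t : ℝ, ∀ i, β i * t ≤ s i := by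
      by_cases hneg : Nonempty {j : ι // β j < 0}
      · haveI := hneg
        set T : ℝ := (Finset.univ : Finset {j : ι // β j < 0}).sup' Finset.univ_nonempty
          (fun j => s j.1 / β j.1) with hT
        refine ⟨T, fun i => ?_⟩
        rcases lt_trichotomy (β i) 0 with h | h | h
        · have hle : s i / β i ≤ T :=
            Finset.le_sup' (fun j : {j : ι // β j < 0} => s j.1 / β j.1)
              (Finset.mem_univ (⟨i, h⟩ : {j : ι // β j < 0}))
          calc β i * T ≤ β i * (s i / β i) := mul_le_mul_of_nonpos_left hle (le_of_lt h)
            _ = s i := by rw [mul_comm, div_mul_cancel₀ _ (ne_of_lt h)]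
        · simpa [h] using hzero i h
        · have hle : T ≤ s i / β i :=
            Finset.sup'_le _ _ (fun j _ => hdivpair i j.1 h j.2)
          calc β i * T ≤ β i * (s i / β i) := mul_le_mul_of_nonneg_left hle (le_of_lt h)
            _ = s i := by rw [mul_comm, div_mul_cancel₀ _ (ne_of_gt h)]
      · by_cases hpos : Nonempty {i : ι // 0 < β i}
        · haveI := hpos
          set T : ℝ := (Finset.univ : Finset {i : ι // 0 < β i}).inf' Finset.univ_nonempty
            (fun i => s i.1 / β i.1) with hT
          refine ⟨T, fun i => ?_⟩
          rcases lt_trichotomy (β i) 0 with h | h | h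
          · exact absurd ⟨⟨i, h⟩⟩ hneg
          · simpa [h] using hzero i h
          · have hle : T ≤ s i / β i :=
              Finset.inf'_le (fun i : {i : ι // 0 < β i} => s i.1 / β i.1)
                (Finset.mem_univ (⟨i, h⟩ : {i : ι // 0 < β i}))
            calc β i * T ≤ β i * (s i / β i) := mul_le_mul_of_nonneg_left hle (le_of_lt h)
              _ = s i := by rw [mul_comm, div_mul_cancel₀ _ (ne_of_gt h)]
        · refine ⟨0, fun i => ?_⟩
          rcases lt_trichotomy (β i) 0 with h | h | h
          · exact absurd ⟨⟨i, h⟩⟩ hneg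
          · simpa [h] using hzero i h
          · exact absurd ⟨⟨i, h⟩⟩ hpos
    obtain ⟨t, ht⟩ := key
    refine ⟨Fin.snoc y₀ t, fun i => ?_⟩
    rw [Fin.sum_univ_castSucc]
    simp only [Fin.snoc_castSucc, Fin.snoc_last]
    have := ht i
    simp only [hs] at this
    have : (∑ p, R i p.castSucc * y₀ p) + R i (Fin.last m) * t ≤ c i := by
      have h2 := ht i
      simp only [hs, hβ, hR₀] at h2 ⊢
      linarith
    exact this


open Classical in
private noncomputable def supp {k : ℕ} (v : Fin k → ℝ) : Finset (Fin k) :=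
  Finset.univ.filter (fun i => v i ≠ 0)

private lemma mem_supp {k : ℕ} {v : Fin k → ℝ} {i : Fin k} : i ∈ supp v ↔ v i ≠ 0 := by
  classical simp [supp]

private lemma reduce {k m : ℕ} (B : Matrix (Fin k) (Fin m) ℝ) (v w : Fin k → ℝ)
    (hv : v ∈ {v : Fin k → ℝ | (∀ i, 0 ≤ v i) ∧ Matrix.vecMul v B = 0})
    (hw : w ∈ {v : Fin k → ℝ | (∀ i, 0 ≤ v i) ∧ Matrix.vecMul v B = 0})
    (hw0 : w ≠ 0) (hsub : supp w ⊆ supp v) :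
    ∃ t : ℝ, 0 < t ∧ (v - t • w) ∈ {v : Fin k → ℝ | (∀ i, 0 ≤ v i) ∧ Matrix.vecMul v B = 0} ∧
      supp (v - t • w) ⊂ supp v := by
  obtain ⟨i1, hi1⟩ := Function.ne_iff.1 hw0
  have hne : (supp w).Nonempty := ⟨i1, mem_supp.2 hi1⟩
  obtain ⟨i₀, hi₀, hmin⟩ := Finset.exists_min_image (supp w) (fun i => v i / w i) hne
  have wpos : ∀ i ∈ supp w, 0 < w i := fun i hi =>
    (hw.1 i).lt_of_ne (Ne.symm (mem_supp.1 hi))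
  have vpos : ∀ i ∈ supp w, 0 < v i := fun i hi =>
    (hv.1 i).lt_of_ne (Ne.symm (mem_supp.1 (hsub hi)))
  set t : ℝ := v i₀ / w i₀ with htdef
  have ht : 0 < t := div_pos (vpos i₀ hi₀) (wpos i₀ hi₀)
  have happ : ∀ i, (v - t • w) i = v i - t * w i := fun i => rfl
  have hnonneg : ∀ i, 0 ≤ (v - t • w) i := by
    intro i
    rw [happ]
    by_cases hi : i ∈ supp w
    · have h1 : t * w i ≤ (v i / w i) * w i :=
        mul_le_mul_of_nonneg_right (hmin i hi) (le_of_lt (wpos i hi))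
      rw [div_mul_cancel₀ _ (ne_of_gt (wpos i hi))] at h1
      linarith
    · have : w i = 0 := not_not.1 (fun h => hi (mem_supp.2 h))
      rw [this]; simpa using hv.1 i
  have hzero₀ : (v - t • w) i₀ = 0 := by
    rw [happ, htdef, div_mul_cancel₀ _ (ne_of_gt (wpos i₀ hi₀)), sub_self]
  have hmem : (v - t • w) ∈ {v : Fin k → ℝ | (∀ i, 0 ≤ v i) ∧ Matrix.vecMul v B = 0} := by
    refine ⟨hnonneg, ?_⟩
    rw [Matrix.sub_vecMul]
    rw [Matrix.smul_vecMul, hv.2, hw.2]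
    simp
  have hsub2 : supp (v - t • w) ⊆ supp v := by
    intro i hi
    rw [mem_supp] at hi ⊢
    intro hvi
    have hwi : w i = 0 := by
      by_contra hwi
      exact (mem_supp.1 (hsub (mem_supp.2 hwi))) hvi
    exact hi (by rw [happ, hvi, hwi]; ring)
  exact ⟨t, ht, hmem, (Finset.ssubset_iff_of_subset hsub2).2
    ⟨i₀, hsub hi₀, fun h => (mem_supp.1 h) hzero₀⟩⟩

private lemma extreme_of_min {k m : ℕ} (B : Matrix (Fin k) (Fin m) ℝ) (v : Fin k → ℝ)
    (hv : v ∈ {v : Fin k → ℝ | (∀ i, 0 ≤ v i) ∧ Matrix.vecMul v B = 0}) (hv0 : v ≠ 0)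
    (hmin : ∀ w ∈ {v : Fin k → ℝ | (∀ i, 0 ≤ v i) ∧ Matrix.vecMul v B = 0},
      supp w ⊂ supp v → w = 0) :
    IsExtremeRay {v : Fin k → ℝ | (∀ i, 0 ≤ v i) ∧ Matrix.vecMul v B = 0} v := by
  refine ⟨hv, hv0, fun x hx y hy hxy => ?_⟩
  have main : ∃ a : ℝ, 0 ≤ a ∧ a ≤ 1 ∧ x = a • v := by
    by_cases hx0 : x = 0
    · exact ⟨0, le_refl 0, zero_le_one, by simp [hx0]⟩
    · have hsub : supp x ⊆ supp v := by
        intro i hi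
        rw [mem_supp] at hi ⊢
        intro hvi
        have h2 := congrFun hxy i
        rw [hvi] at h2
        simp only [Pi.add_apply] at h2
        have hxi := hx.1 i
        have hyi := hy.1 i
        exact hi (by linarith)
      obtain ⟨t, ht, hmem, hss⟩ := reduce B v x hv hx hx0 hsub
      have h0 : v - t • x = 0 := hmin _ hmem hss
      have hvt : v = t • x := by rwa [sub_eq_zero] at h0
      have hxv : x = t⁻¹ • v := by
        rw [hvt, smul_smul, inv_mul_cancel₀ (ne_of_gt ht), one_smul]
      refine ⟨t⁻¹, le_of_lt (inv_pos.2 ht), ?_, hxv⟩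
      obtain ⟨i, hi⟩ := Function.ne_iff.1 hv0
      have hvi : 0 < v i := (hv.1 i).lt_of_ne (Ne.symm hi)
      have hyi : 0 ≤ y i := hy.1 i
      have heq : v i = t⁻¹ * v i + y i := by
        have h1 := congrFun hxy i
        rw [hxv] at h1
        simpa using h1
      nlinarith [heq, hvi, hyi]
  obtain ⟨a, ha0, ha1, hxa⟩ := main
  refine ⟨⟨a, ha0, hxa⟩, ⟨1 - a, by linarith, ?_⟩⟩
  have hy' : y = v - x := by rw [hxy]; abel
  rw [hy', hxa, sub_smul, one_smul]

private lemma exists_ray {k m : ℕ} (B : Matrix (Fin k) (Fin m) ℝ) (c : Fin k → ℝ) :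
    ∀ (N : ℕ) (v : Fin k → ℝ), (supp v).card ≤ N →
    v ∈ {v : Fin k → ℝ | (∀ i, 0 ≤ v i) ∧ Matrix.vecMul v B = 0} → v ⬝ᵥ c < 0 →
    ∃ r, IsExtremeRay {v : Fin k → ℝ | (∀ i, 0 ≤ v i) ∧ Matrix.vecMul v B = 0} r ∧ r ⬝ᵥ c < 0 := by
  intro N
  induction N with
  | zero =>
    intro v hcard hv hvc
    exfalso
    have hv0 : v = 0 := by
      funext i
      by_contra h
      have : i ∈ supp v := mem_supp.2 h
      have := Finset.card_pos.2 ⟨i, this⟩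
      omega
    rw [hv0] at hvc
    simp [zero_dotProduct] at hvc
  | succ N ihN =>
    intro v hcard hv hvc
    by_cases hmin : ∀ w ∈ {v : Fin k → ℝ | (∀ i, 0 ≤ v i) ∧ Matrix.vecMul v B = 0},
        supp w ⊂ supp v → w = 0
    · have hv0 : v ≠ 0 := by
        rintro rfl
        simp [zero_dotProduct] at hvc
      exact ⟨v, extreme_of_min B v hv hv0 hmin, hvc⟩
    · push_neg at hmin
      obtain ⟨w, hwS, hss, hw0⟩ := hmin
      obtain ⟨t, ht, hmem, hss2⟩ := reduce B v w hv hwS hw0 hss.subset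
      have hcard1 : (supp w).card ≤ N := by
        have := Finset.card_lt_card hss
        omega
      have hcard2 : (supp (v - t • w)).card ≤ N := by
        have := Finset.card_lt_card hss2
        omega
      have hsplit : v ⬝ᵥ c = (v - t • w) ⬝ᵥ c + t * (w ⬝ᵥ c) := by
        rw [sub_dotProduct, smul_dotProduct, smul_eq_mul]
        ring
      by_cases hwc : w ⬝ᵥ c < 0
      · exact ihN w hcard1 hwS hwc
      · push_neg at hwc
        exact ihN (v - t • w) hcard2 hmem (by nlinarith)

/-- Projection lemma: the projection of `P = {(x,y) : Ax + By ≤ b}` onto the `x`-space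
is described by the inequalities `rᵀ(b - Ax) ≥ 0` over the extreme rays `r` of the pointed
cone `Q = {v ≥ 0 : vᵀB = 0}`. -/
theorem projection_of_polyhedron_via_extreme_rays {n m k : ℕ}
    (A : Matrix (Fin k) (Fin n) ℝ) (B : Matrix (Fin k) (Fin m) ℝ) (b : Fin k → ℝ)
    (Q : Set (Fin k → ℝ))
    (hQ : Q = {v | (∀ i, 0 ≤ v i) ∧ Matrix.vecMul v B = 0}) :
    {x : Fin n → ℝ | ∃ y : Fin m → ℝ, ∀ i, A.mulVec x i + B.mulVec y i ≤ b i} =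
      {x : Fin n → ℝ | ∀ r, IsExtremeRay Q r → 0 ≤ r ⬝ᵥ (b - A.mulVec x)} := by
  subst hQ
  ext x
  simp only [Set.mem_setOf_eq]
  constructor
  · rintro ⟨y, hy⟩ r hr
    obtain ⟨⟨hrpos, hrB⟩, -, -⟩ := hr
    have h1 : r ⬝ᵥ B.mulVec y = 0 := by
      rw [Matrix.dotProduct_mulVec, hrB, zero_dotProduct]
    have h2 : r ⬝ᵥ B.mulVec y ≤ r ⬝ᵥ (b - A.mulVec x) := by
      simp only [dotProduct]
      apply Finset.sum_le_sum
      intro i _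
      apply mul_le_mul_of_nonneg_left _ (hrpos i)
      simp only [Pi.sub_apply]
      linarith [hy i]
    linarith
  · intro H
    have Hf : ∃ y : Fin m → ℝ, ∀ i, ∑ q, B i q * y q ≤ b i - A.mulVec x i := by
      apply farkas_rows m (Fin k) (fun i q => B i q) (fun i => b i - A.mulVec x i)
      intro v hvpos hvzero
      by_contra hneg
      push_neg at hneg
      have hvS : v ∈ {v : Fin k → ℝ | (∀ i, 0 ≤ v i) ∧ Matrix.vecMul v B = 0} := by
        refine ⟨hvpos, funext fun q => ?_⟩
        exact hvzero q
      have hdot : v ⬝ᵥ (b - A.mulVec x) < 0 := by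
        have : v ⬝ᵥ (b - A.mulVec x) = ∑ i, v i * (b i - A.mulVec x i) := by
          simp [dotProduct]
        rw [this]
        exact hneg
      obtain ⟨r, hr, hrc⟩ := exists_ray B (b - A.mulVec x) (supp v).card v le_rfl hvS hdot
      exact absurd (H r hr) (not_le.2 hrc)
    obtain ⟨y, hy⟩ := Hf
    refine ⟨y, fun i => ?_⟩
    have h1 := hy i
    have h2 : B.mulVec y i = ∑ q, B i q * y q := rfl
    linarith
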